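/- Let H > 0 and α > 0, and define v(y) = H·Φ(−(ln y)/α + α/2) − H·y·Φ(−(ln y)/α − α/2) for y > 0, where Φ is the standard normal cumulative distribution function. Then for every z ∈ ℝ, setting x = H·Φ(z) and y* = e^{−αz − α²/2}, one has v'(y*) = −x, the infimum inf_{y > 0}(v(y) + x·y) is attained at y = y*, and v(y*) + x·y* = H·Φ(z + α). -/

import Mathlib

open Real Set Filter MeasureTheory

/-- The standard normal cumulative distribution function. -/
noncomputable def stdNormalCdf : ℝ → ℝ :=
  fun t => ∫ u in Iic t, Real.exp (-u ^ 2 / 2) / Real.sqrt (2 * Real.pi)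

/-- The standard normal density. -/
noncomputable def stdNormalPdf (t : ℝ) : ℝ := Real.exp (-t ^ 2 / 2) / Real.sqrt (2 * Real.pi)

lemma stdNormalPdf_nonneg (t : ℝ) : 0 ≤ stdNormalPdf t := by unfold stdNormalPdf; positivity

lemma continuous_stdNormalPdf : Continuous stdNormalPdf := by
  unfold stdNormalPdf; fun_prop

lemma integrable_stdNormalPdf : Integrable stdNormalPdf := by
  have h : Integrable (fun x : ℝ => Real.exp (-(1/2 : ℝ) * x ^ 2)) :=
    integrable_exp_neg_mul_sq (by norm_num)
  have h2 := h.div_const (Real.sqrt (2 * Real.pi))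
  refine h2.congr (Eventually.of_forall fun t => ?_)
  unfold stdNormalPdf
  ring_nf

lemma hasDerivAt_stdNormalCdf (t : ℝ) : HasDerivAt stdNormalCdf (stdNormalPdf t) t := by
  have key : ∀ x : ℝ, stdNormalCdf x = stdNormalCdf 0 + ∫ u in (0:ℝ)..x, stdNormalPdf u := by
    intro x
    have := intervalIntegral.integral_Iic_sub_Iic (μ := volume)
      (integrable_stdNormalPdf.integrableOn) (integrable_stdNormalPdf.integrableOn)
      (a := 0) (b := x)
    unfold stdNormalCdf stdNormalPdf
    unfold stdNormalPdf at this
    linarith [this]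
  have h1 : HasDerivAt (fun x => stdNormalCdf 0 + ∫ u in (0:ℝ)..x, stdNormalPdf u)
      (stdNormalPdf t) t := by
    have h0 : HasDerivAt (fun x => ∫ u in (0:ℝ)..x, stdNormalPdf u) (stdNormalPdf t) t :=
      intervalIntegral.integral_hasDerivAt_right
        (continuous_stdNormalPdf.intervalIntegrable _ _)
        (continuous_stdNormalPdf.stronglyMeasurableAtFilter _ _)
        continuous_stdNormalPdf.continuousAt
    exact h0.const_add (stdNormalCdf 0)
  exact h1.congr_of_eventuallyEq (Eventually.of_forall key)

lemma monotone_stdNormalCdf : Monotone stdNormalCdf :=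
  monotone_of_deriv_nonneg (fun t => (hasDerivAt_stdNormalCdf t).differentiableAt)
    (fun t => by rw [(hasDerivAt_stdNormalCdf t).deriv]; exact stdNormalPdf_nonneg t)

lemma stdNormalPdf_shift (α y : ℝ) (hα : 0 < α) (hy : 0 < y) :
    stdNormalPdf (-(Real.log y) / α + α / 2) = y * stdNormalPdf (-(Real.log y) / α - α / 2) := by
  have key : Real.exp (-(-(Real.log y) / α + α / 2) ^ 2 / 2)
      = y * Real.exp (-(-(Real.log y) / α - α / 2) ^ 2 / 2) := by
    conv_rhs => rw [← Real.exp_log hy, ← Real.exp_add]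
    congr 1
    simp only [Real.log_exp]
    field_simp
    ring
  unfold stdNormalPdf
  rw [key]
  ring

lemma hasDerivAt_vfun (H α : ℝ) (hα : 0 < α) (y : ℝ) (hy : 0 < y) :
    HasDerivAt (fun y => H * stdNormalCdf (-(Real.log y) / α + α / 2) -
        H * y * stdNormalCdf (-(Real.log y) / α - α / 2))
      (-(H * stdNormalCdf (-(Real.log y) / α - α / 2))) y := by
  have hlog : HasDerivAt Real.log y⁻¹ y := Real.hasDerivAt_log hy.ne'
  have ha : HasDerivAt (fun y => -(Real.log y) / α + α / 2) (-(y⁻¹) / α) y :=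
    (hlog.neg.div_const α).add_const (α / 2)
  have hb : HasDerivAt (fun y => -(Real.log y) / α - α / 2) (-(y⁻¹) / α) y :=
    (hlog.neg.div_const α).sub_const (α / 2)
  have hΦa : HasDerivAt (fun y => stdNormalCdf (-(Real.log y) / α + α / 2))
      (stdNormalPdf (-(Real.log y) / α + α / 2) * (-(y⁻¹) / α)) y :=
    (hasDerivAt_stdNormalCdf _).comp y ha
  have hΦb : HasDerivAt (fun y => stdNormalCdf (-(Real.log y) / α - α / 2))
      (stdNormalPdf (-(Real.log y) / α - α / 2) * (-(y⁻¹) / α)) y :=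
    (hasDerivAt_stdNormalCdf _).comp y hb
  have hHy : HasDerivAt (fun y : ℝ => H * y) H y := by
    simpa using (hasDerivAt_id y).const_mul H
  have total : HasDerivAt (fun y => H * stdNormalCdf (-(Real.log y) / α + α / 2) -
      H * y * stdNormalCdf (-(Real.log y) / α - α / 2))
      (H * (stdNormalPdf (-(Real.log y) / α + α / 2) * (-(y⁻¹) / α)) -
        (H * stdNormalCdf (-(Real.log y) / α - α / 2) +
          H * y * (stdNormalPdf (-(Real.log y) / α - α / 2) * (-(y⁻¹) / α)))) y :=
    (hΦa.const_mul H).sub (hHy.mul hΦb)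
  have hE : H * (stdNormalPdf (-(Real.log y) / α + α / 2) * (-(y⁻¹) / α)) -
      (H * stdNormalCdf (-(Real.log y) / α - α / 2) +
        H * y * (stdNormalPdf (-(Real.log y) / α - α / 2) * (-(y⁻¹) / α))) =
      -(H * stdNormalCdf (-(Real.log y) / α - α / 2)) := by
    rw [stdNormalPdf_shift α y hα hy]
    field_simp
    ring
  exact hE ▸ total

theorem stmt_12 (H α : ℝ) (hH : 0 < H) (hα : 0 < α) :
    let v : ℝ → ℝ := fun y =>
      H * stdNormalCdf (-(Real.log y) / α + α / 2) -
        H * y * stdNormalCdf (-(Real.log y) / α - α / 2)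
    ∀ z : ℝ,
      HasDerivAt v (-(H * stdNormalCdf z)) (Real.exp (-α * z - α ^ 2 / 2)) ∧
      IsLeast ((fun y => v y + (H * stdNormalCdf z) * y) '' Ioi 0)
        (v (Real.exp (-α * z - α ^ 2 / 2)) +
          (H * stdNormalCdf z) * Real.exp (-α * z - α ^ 2 / 2)) ∧
      v (Real.exp (-α * z - α ^ 2 / 2)) +
          (H * stdNormalCdf z) * Real.exp (-α * z - α ^ 2 / 2) =
        H * stdNormalCdf (z + α) := by
  intro v z
  set ystar : ℝ := Real.exp (-α * z - α ^ 2 / 2) with hystar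
  have hyspos : 0 < ystar := Real.exp_pos _
  have hlogys : Real.log ystar = -α * z - α ^ 2 / 2 := Real.log_exp _
  have hbstar : -(Real.log ystar) / α - α / 2 = z := by
    rw [hlogys]; field_simp; ring
  have hastar : -(Real.log ystar) / α + α / 2 = z + α := by
    rw [hlogys]; field_simp; ring
  -- derivative of g at any point of Ioi 0
  have hg : ∀ y : ℝ, 0 < y →
      HasDerivAt (fun y => v y + (H * stdNormalCdf z) * y)
        (H * stdNormalCdf z - H * stdNormalCdf (-(Real.log y) / α - α / 2)) y := by
    intro y hy
    have h1 := hasDerivAt_vfun H α hα y hy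
    have h2 : HasDerivAt (fun y : ℝ => (H * stdNormalCdf z) * y) (H * stdNormalCdf z) y := by
      simpa using (hasDerivAt_id y).const_mul (H * stdNormalCdf z)
    have := h1.add h2
    exact this.congr_deriv (by ring)
  refine ⟨?_, ?_, ?_⟩
  · have := hasDerivAt_vfun H α hα ystar hyspos
    rwa [hbstar] at this
  · constructor
    · exact ⟨ystar, hyspos, rfl⟩
    · rintro w ⟨y, hy, rfl⟩
      simp only [mem_Ioi] at hy
      have hble : ∀ t : ℝ, ystar ≤ t → -(Real.log t) / α - α / 2 ≤ z := by
        intro t ht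
        rw [← hbstar]
        have hlt : Real.log ystar ≤ Real.log t := Real.log_le_log hyspos ht
        have : -(Real.log t) / α ≤ -(Real.log ystar) / α :=
          (div_le_div_iff_of_pos_right hα).mpr (by linarith)
        linarith
      have hbge : ∀ t : ℝ, 0 < t → t ≤ ystar → z ≤ -(Real.log t) / α - α / 2 := by
        intro t ht h
        rw [← hbstar]
        have hlt : Real.log t ≤ Real.log ystar := Real.log_le_log ht h
        have : -(Real.log ystar) / α ≤ -(Real.log t) / α :=
          (div_le_div_iff_of_pos_right hα).mpr (by linarith)
        linarith
      rcases le_total ystar y with hcase | hcase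
      · have mono : MonotoneOn (fun y => v y + (H * stdNormalCdf z) * y) (Ici ystar) := by
          apply monotoneOn_of_deriv_nonneg (convex_Ici _)
          · intro t ht
            exact (hg t (lt_of_lt_of_le hyspos ht)).continuousAt.continuousWithinAt
          · intro t ht
            rw [interior_Ici] at ht
            exact ((hg t (lt_trans hyspos ht)).differentiableAt.differentiableWithinAt)
          · intro t ht
            rw [interior_Ici] at ht
            have htpos : 0 < t := lt_trans hyspos ht
            rw [(hg t htpos).deriv]
            have h1 : stdNormalCdf (-(Real.log t) / α - α / 2) ≤ stdNormalCdf z :=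
              monotone_stdNormalCdf (hble t (le_of_lt ht))
            nlinarith
        exact mono (self_mem_Ici) hcase hcase
      · have anti : AntitoneOn (fun y => v y + (H * stdNormalCdf z) * y) (Ioc 0 ystar) := by
          apply antitoneOn_of_deriv_nonpos (convex_Ioc _ _)
          · intro t ht
            exact (hg t ht.1).continuousAt.continuousWithinAt
          · intro t ht
            rw [interior_Ioc] at ht
            exact ((hg t ht.1).differentiableAt.differentiableWithinAt)
          · intro t ht
            rw [interior_Ioc] at ht
            rw [(hg t ht.1).deriv]
            have h1 : stdNormalCdf z ≤ stdNormalCdf (-(Real.log t) / α - α / 2) :=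
              monotone_stdNormalCdf (hbge t ht.1 (le_of_lt ht.2))
            nlinarith
        exact anti ⟨hy, hcase⟩ ⟨hyspos, le_refl _⟩ hcase
  · show v ystar + (H * stdNormalCdf z) * ystar = H * stdNormalCdf (z + α)
    simp only [v, hastar, hbstar]
    ring
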